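/- Fix positive integers k, ℓ, m and an integer j with 0 ≤ j ≤ k−1. For all complex q, z with |q| < 1, the sum of z^{|S|} q^{Σ_{s∈S} s} over all finite subsets S of the positive integers satisfying b_S(km − j) = ℓm − ℓ and b_S(km − j − 1) = ℓm − ℓ + 1 equals ((-zq;q)_{km-j-1}/(q;q)_{ℓm-ℓ}) z^{ℓm-ℓ+1} q^{(ℓm-ℓ+1)((2k+ℓ)m-2j-ℓ)/2}. -/

import Mathlib

open Finset

def klBset : ℕ → (L : ℕ) → (Fin L → ℕ) → Finset ℕ+
  | _, 0, _ => ∅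
  | M, L+1, d => insert (M + d 0).succPNat (klBset (M + d 0 + 1) L (Fin.tail d))

lemma klBset_gt : ∀ (L M : ℕ) (d : Fin L → ℕ) (b : ℕ+), b ∈ klBset M L d → M < (b : ℕ) := by
  intro L
  induction L with
  | zero => intro M d b hb; simp [klBset] at hb
  | succ L ih =>
    intro M d b hb
    rw [klBset, mem_insert] at hb
    rcases hb with h | h
    · subst h; simp [Nat.succPNat]
    · have := ih _ _ _ h; omega

lemma klBset_head_not_mem (M L : ℕ) (d : Fin (L+1) → ℕ) :
    (M + d 0).succPNat ∉ klBset (M + d 0 + 1) L (Fin.tail d) := by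
  intro h
  have := klBset_gt _ _ _ _ h
  simp [Nat.succPNat] at this

lemma klBset_card : ∀ (L M : ℕ) (d : Fin L → ℕ), (klBset M L d).card = L := by
  intro L
  induction L with
  | zero => intro M d; simp [klBset]
  | succ L ih =>
    intro M d
    rw [klBset, card_insert_of_notMem (klBset_head_not_mem M L d), ih]

lemma klBset_sum : ∀ (L M : ℕ) (d : Fin L → ℕ),
    ∑ b ∈ klBset M L d, (b : ℕ) =
      (∑ i ∈ range L, (M + 1 + i)) + ∑ i : Fin L, (L - (i : ℕ)) * d i := by
  intro L
  induction L with
  | zero => intro M d; simp [klBset]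
  | succ L ih =>
    intro M d
    rw [klBset, sum_insert (klBset_head_not_mem M L d), ih]
    have h1 : ∑ i : Fin (L+1), ((L+1) - (i : ℕ)) * d i
        = (L+1) * d 0 + ∑ i : Fin L, (L - (i : ℕ)) * Fin.tail d i := by
      rw [Fin.sum_univ_succ]
      simp [Fin.tail]
    have h3 : ∑ i ∈ range L, (M + d 0 + 1 + 1 + i) = ∑ i ∈ range L, (M + 2 + i) + L * d 0 := by
      have he : ∀ i, M + d 0 + 1 + 1 + i = (M + 2 + i) + d 0 := by intro i; omega
      simp only [he, sum_add_distrib, sum_const, card_range, smul_eq_mul]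
    have h4 : ∑ i ∈ range (L+1), (M + 1 + i) = (M+1) + ∑ i ∈ range L, (M + 2 + i) := by
      rw [sum_range_succ' (fun i => M + 1 + i) L]
      simp [add_comm]
      apply sum_congr rfl; intro x hx; omega
    have h5 : (L+1) * d 0 = L * d 0 + d 0 := by ring
    rw [Nat.succPNat_coe, h1, h3, h4]
    omega

lemma klBset_inj : ∀ (L M : ℕ) (d d' : Fin L → ℕ),
    klBset M L d = klBset M L d' → d = d' := by
  intro L
  induction L with
  | zero => intro M d d' _; funext i; exact i.elim0
  | succ L ih =>
    intro M d d' h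
    have key : ∀ (e e' : Fin (L+1) → ℕ), klBset M (L+1) e = klBset M (L+1) e' →
        e' 0 ≤ e 0 := by
      intro e e' he
      have hm : (M + e 0).succPNat ∈ klBset M (L+1) e' := by
        rw [← he, klBset]; exact mem_insert_self _ _
      rw [klBset, mem_insert] at hm
      rcases hm with h1 | h1
      · have : M + e 0 + 1 = M + e' 0 + 1 := by
          have := congrArg (fun x : ℕ+ => (x : ℕ)) h1
          simpa [Nat.succPNat_coe] using this
        omega
      · have := klBset_gt _ _ _ _ h1
        rw [Nat.succPNat_coe] at this
        omega
    have h0 : d 0 = d' 0 := le_antisymm (key d' d h.symm) (key d d' h)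
    have htail : Fin.tail d = Fin.tail d' := by
      apply ih (M + d' 0 + 1)
      have hrec := h
      rw [klBset, klBset, h0] at hrec
      have hnd : (M + d' 0).succPNat ∉ klBset (M + d' 0 + 1) L (Fin.tail d) := by
        have := klBset_head_not_mem M L d
        rwa [h0] at this
      have hnd' := klBset_head_not_mem M L d'
      have h3 := congrArg (fun s : Finset ℕ+ => s.erase (M + d' 0).succPNat) hrec
      rwa [Finset.erase_insert hnd, Finset.erase_insert hnd'] at h3
    funext i
    refine Fin.cases ?_ ?_ i
    · exact h0
    · intro i'; exact congrFun htail i'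

lemma klBset_surj : ∀ (L : ℕ) (B : Finset ℕ+) (M : ℕ), B.card = L →
    (∀ b ∈ B, M < (b : ℕ)) → ∃ d : Fin L → ℕ, B = klBset M L d := by
  intro L
  induction L with
  | zero =>
    intro B M hc _
    exact ⟨fun i => i.elim0, by simpa [klBset] using card_eq_zero.mp hc⟩
  | succ L ih =>
    intro B M hc hgt
    have hne : B.Nonempty := card_pos.mp (by omega)
    set x := B.min' hne with hx
    have hxB : x ∈ B := B.min'_mem hne
    have hMx : M < (x : ℕ) := hgt x hxB
    set d0 : ℕ := (x : ℕ) - M - 1 with hd0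
    have hxval : (x : ℕ) = M + d0 + 1 := by omega
    set B' := B.erase x with hB'
    have hcB' : B'.card = L := by rw [hB', card_erase_of_mem hxB, hc]; rfl
    have hgt' : ∀ b ∈ B', (M + d0 + 1) < (b : ℕ) := by
      intro b hb
      have hbB := mem_of_mem_erase hb
      have hne' := ne_of_mem_erase hb
      have hle : x ≤ b := B.min'_le b hbB
      have : x < b := lt_of_le_of_ne hle (Ne.symm hne')
      have := (PNat.coe_lt_coe x b).mpr this
      omega
    obtain ⟨d', hd'⟩ := ih B' (M + d0 + 1) hcB' hgt'
    refine ⟨Fin.cons d0 d', ?_⟩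
    rw [klBset]
    simp only [Fin.cons_zero, Fin.tail_cons]
    rw [← hd']
    have hxeq : (M + d0).succPNat = x := by
      apply PNat.coe_injective
      rw [Nat.succPNat_coe, hxval]
    rw [hxeq, hB', Finset.insert_erase hxB]

lemma klPi (L : ℕ) (f : Fin L → ℕ → ℂ) (hf : ∀ i, Summable fun n => ‖f i n‖) :
    Summable (fun d : Fin L → ℕ => ‖∏ i, f i (d i)‖) ∧
      (∑' d : Fin L → ℕ, ∏ i, f i (d i)) = ∏ i, ∑' n, f i n := by
  induction L with
  | zero =>
    have hfin : Finite (Fin 0 → ℕ) := Finite.of_subsingleton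
    constructor
    · exact Summable.of_finite
    · rw [tsum_eq_sum (s := {(fun i => i.elim0 : Fin 0 → ℕ)})
        (fun b hb => absurd (Subsingleton.elim b _) (by simpa using hb))]
      simp
  | succ L IH =>
    obtain ⟨ihS, ihT⟩ := IH (fun i => f i.succ) (fun i => hf i.succ)
    have hkey : ∀ p : ℕ × (Fin L → ℕ),
        (∏ i, f i ((Fin.cons p.1 p.2 : Fin (L+1) → ℕ) i)) = f 0 p.1 * ∏ i : Fin L, f i.succ (p.2 i) := by
      intro p
      rw [Fin.prod_univ_succ]
      simp
    have hsum2 : Summable (fun p : ℕ × (Fin L → ℕ) =>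
        ‖f 0 p.1 * ∏ i : Fin L, f i.succ (p.2 i)‖) := by apply Summable.mul_norm (hf 0) ihS
    have hEeq : ∀ p : ℕ × (Fin L → ℕ),
        (Fin.consEquiv (fun _ : Fin (L+1) => ℕ)) p = (Fin.cons p.1 p.2 : Fin (L+1) → ℕ) := fun p => rfl
    constructor
    · rw [← (Fin.consEquiv (fun _ : Fin (L+1) => ℕ)).summable_iff]
      apply hsum2.congr
      intro p
      simp only [Function.comp_apply, hEeq, hkey]
    · rw [← (Fin.consEquiv (fun _ : Fin (L+1) => ℕ)).tsum_eq]
      calc ∑' p : ℕ × (Fin L → ℕ), (∏ i, f i ((Fin.consEquiv (fun _ : Fin (L+1) => ℕ)) p i))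
          = ∑' p : ℕ × (Fin L → ℕ), f 0 p.1 * ∏ i : Fin L, f i.succ (p.2 i) := by
            apply tsum_congr; intro p; rw [hEeq, hkey]
        _ = (∑' n, f 0 n) * ∑' dd : Fin L → ℕ, ∏ i : Fin L, f i.succ (dd i) := by
            symm; apply tsum_mul_tsum_of_summable_norm (hf 0) ihS
        _ = ∏ i, ∑' n, f i n := by
            rw [ihT, Fin.prod_univ_succ]

lemma klGeomNormLt (q : ℂ) (hq : ‖q‖ < 1) {c : ℕ} (hc : c ≠ 0) : ‖q ^ c‖ < 1 := by
  rw [norm_pow]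
  calc ‖q‖ ^ c ≤ ‖q‖ := pow_le_of_le_one (norm_nonneg q) (le_of_lt hq) hc
    _ < 1 := hq

lemma klGeomSummable (q : ℂ) (hq : ‖q‖ < 1) {c : ℕ} (hc : c ≠ 0) :
    Summable fun n : ℕ => ‖q ^ (c * n)‖ := by
  apply Summable.congr (summable_geometric_of_lt_one (norm_nonneg (q ^ c))
    (klGeomNormLt q hq hc))
  intro n
  rw [← norm_pow, ← pow_mul]

lemma klGeomTsum (q : ℂ) (hq : ‖q‖ < 1) {c : ℕ} (hc : c ≠ 0) :
    (∑' n : ℕ, q ^ (c * n)) = (1 - q ^ c)⁻¹ := by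
  have := (hasSum_geometric_of_norm_lt_one (klGeomNormLt q hq hc)).tsum_eq
  rw [← this]
  apply tsum_congr
  intro n
  rw [← pow_mul]

lemma klH (q : ℂ) (hq : ‖q‖ < 1) (L : ℕ) :
    Summable (fun d : Fin L → ℕ => ‖∏ i : Fin L, q ^ ((L - (i : ℕ)) * d i)‖) ∧
      (∑' d : Fin L → ℕ, ∏ i : Fin L, q ^ ((L - (i : ℕ)) * d i))
        = ∏ a ∈ range L, (1 - q ^ (a + 1))⁻¹ := by
  have hcne : ∀ i : Fin L, (L - (i : ℕ)) ≠ 0 := fun i => by have := i.isLt; omega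
  obtain ⟨hS, hT⟩ := klPi L (fun i n => q ^ ((L - (i : ℕ)) * n))
    (fun i => klGeomSummable q hq (hcne i))
  refine ⟨hS, ?_⟩
  rw [hT]
  have h1 : ∀ i : Fin L, (∑' n : ℕ, q ^ ((L - (i : ℕ)) * n)) = (1 - q ^ (L - (i : ℕ)))⁻¹ :=
    fun i => klGeomTsum q hq (hcne i)
  rw [Finset.prod_congr rfl (fun i _ => h1 i)]
  rw [Fin.prod_univ_eq_prod_range (fun a => (1 - q ^ (L - a))⁻¹) L]
  rw [← Finset.prod_range_reflect (fun a => (1 - q ^ (a + 1))⁻¹) L]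
  apply Finset.prod_congr rfl
  intro x hx
  rw [mem_range] at hx
  have hxe : L - x = L - 1 - x + 1 := by omega
  rw [hxe]

lemma klLow (P : ℕ) (z q : ℂ) :
    ∑ A : Finset (Fin P), z ^ A.card * q ^ (∑ a ∈ A, ((a : ℕ) + 1))
      = ∏ a ∈ range P, (1 + z * q ^ (a + 1)) := by
  rw [← Fin.prod_univ_eq_prod_range (fun a => (1 + z * q ^ (a + 1))) P]
  have := Finset.prod_add (fun i : Fin P => z * q ^ ((i : ℕ) + 1)) (fun _ => (1 : ℂ)) univ
  have hcomm : (∏ i : Fin P, (1 + z * q ^ ((i : ℕ) + 1)))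
      = ∏ i : Fin P, (z * q ^ ((i : ℕ) + 1) + 1) :=
    Finset.prod_congr rfl (fun i _ => add_comm _ _)
  rw [hcomm, this, ← Finset.powerset_univ]
  apply Finset.sum_congr rfl
  intro t _
  rw [Finset.prod_const, Finset.prod_mul_distrib, Finset.prod_const,
    Finset.prod_pow_eq_pow_sum]
  ring

def klLowEmb (P : ℕ) : Fin P ↪ ℕ+ :=
  ⟨fun a => (a : ℕ).succPNat, by
    intro a b h
    have := congrArg (fun x : ℕ+ => (x : ℕ)) h
    simp only [Nat.succPNat_coe] at this
    exact Fin.ext (by omega)⟩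

lemma klLowEmb_apply (P : ℕ) (a : Fin P) : ((klLowEmb P a : ℕ+) : ℕ) = (a : ℕ) + 1 := rfl

def klPsi (P L : ℕ) (A : Finset (Fin P)) (d : Fin L → ℕ) : Finset ℕ+ :=
  A.map (klLowEmb P) ∪ insert P.succPNat (klBset (P+1) L d)

lemma klLow_val {P : ℕ} {A : Finset (Fin P)} {s : ℕ+} (hs : s ∈ A.map (klLowEmb P)) :
    1 ≤ (s : ℕ) ∧ (s : ℕ) ≤ P := by
  rw [mem_map] at hs
  obtain ⟨a, _, rfl⟩ := hs
  simp only [klLowEmb_apply]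
  have := a.isLt
  omega

lemma klLow_mem_iff {P : ℕ} {A : Finset (Fin P)} {s : ℕ+} :
    s ∈ A.map (klLowEmb P) ↔ ∃ a : Fin P, a ∈ A ∧ (s : ℕ) = (a : ℕ) + 1 := by
  rw [mem_map]
  constructor
  · rintro ⟨a, ha, rfl⟩
    exact ⟨a, ha, by simp [klLowEmb_apply]⟩
  · rintro ⟨a, ha, hval⟩
    refine ⟨a, ha, ?_⟩
    apply PNat.coe_injective
    simp [klLowEmb_apply, hval]

lemma klPr_not_mem_bset (P L : ℕ) (d : Fin L → ℕ) :
    P.succPNat ∉ klBset (P+1) L d := by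
  intro h
  have := klBset_gt _ _ _ _ h
  rw [Nat.succPNat_coe] at this
  omega

lemma klPsi_disj (P L : ℕ) (A : Finset (Fin P)) (d : Fin L → ℕ) :
    Disjoint (A.map (klLowEmb P)) (insert P.succPNat (klBset (P+1) L d)) := by
  rw [Finset.disjoint_left]
  intro s hs hmem
  have hv := klLow_val hs
  rw [mem_insert] at hmem
  rcases hmem with rfl | h
  · rw [Nat.succPNat_coe] at hv; omega
  · have := klBset_gt _ _ _ _ h; omega

lemma klPsi_card (P L : ℕ) (A : Finset (Fin P)) (d : Fin L → ℕ) :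
    (klPsi P L A d).card = A.card + (L + 1) := by
  rw [klPsi, card_union_of_disjoint (klPsi_disj P L A d), card_map,
    card_insert_of_notMem (klPr_not_mem_bset P L d), klBset_card]

lemma klPsi_sum (P L : ℕ) (A : Finset (Fin P)) (d : Fin L → ℕ) :
    ∑ s ∈ klPsi P L A d, (s : ℕ) =
      (∑ a ∈ A, ((a : ℕ) + 1)) +
        ((P + 1) + ((∑ i ∈ range L, (P + 1 + 1 + i)) + ∑ i : Fin L, (L - (i : ℕ)) * d i)) := by
  rw [klPsi, sum_union (klPsi_disj P L A d), sum_insert (klPr_not_mem_bset P L d),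
    klBset_sum, Finset.sum_map, Nat.succPNat_coe]
  have : ∀ a ∈ A, ((klLowEmb P a : ℕ+) : ℕ) = (a : ℕ) + 1 := by
    intro a _; simp [klLowEmb_apply]
  rw [Finset.sum_congr rfl this]

lemma klPsi_filter_high (P L : ℕ) (A : Finset (Fin P)) (d : Fin L → ℕ) :
    (klPsi P L A d).filter (fun s : ℕ+ => P + 1 < (s : ℕ)) = klBset (P+1) L d := by
  ext s
  rw [mem_filter, klPsi, mem_union, mem_insert]
  constructor
  · rintro ⟨hmem, hgt⟩
    rcases hmem with h | rfl | h
    · have := klLow_val h; omega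
    · rw [Nat.succPNat_coe] at hgt; omega
    · exact h
  · intro h
    exact ⟨Or.inr (Or.inr h), klBset_gt _ _ _ _ h⟩

lemma klPsi_filter_mid (P L : ℕ) (A : Finset (Fin P)) (d : Fin L → ℕ) :
    (klPsi P L A d).filter (fun s : ℕ+ => P < (s : ℕ)) =
      insert P.succPNat (klBset (P+1) L d) := by
  ext s
  rw [mem_filter, klPsi, mem_union, mem_insert]
  constructor
  · rintro ⟨hmem, hgt⟩
    rcases hmem with h | rfl | h
    · have := klLow_val h; omega
    · exact Or.inl rfl
    · exact Or.inr h
  · rintro (rfl | h)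
    · exact ⟨Or.inr (Or.inl rfl), by rw [Nat.succPNat_coe]; omega⟩
    · refine ⟨Or.inr (Or.inr h), ?_⟩
      have := klBset_gt _ _ _ _ h; omega

lemma klPsi_filter_low (P L : ℕ) (A : Finset (Fin P)) (d : Fin L → ℕ) :
    (klPsi P L A d).filter (fun s : ℕ+ => (s : ℕ) ≤ P) = A.map (klLowEmb P) := by
  ext s
  rw [mem_filter, klPsi, mem_union, mem_insert]
  constructor
  · rintro ⟨hmem, hle⟩
    rcases hmem with h | rfl | h
    · exact h
    · rw [Nat.succPNat_coe] at hle; omega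
    · have := klBset_gt _ _ _ _ h; omega
  · intro h
    exact ⟨Or.inl h, (klLow_val h).2⟩

lemma klPsi_inj (P L : ℕ) : Function.Injective
    (fun ω : Finset (Fin P) × (Fin L → ℕ) => klPsi P L ω.1 ω.2) := by
  rintro ⟨A, d⟩ ⟨A', d'⟩ h
  simp only at h
  have hd : d = d' := by
    apply klBset_inj L (P+1)
    rw [← klPsi_filter_high P L A d, ← klPsi_filter_high P L A' d', h]
  have hA : A = A' := by
    apply Finset.map_injective (klLowEmb P)
    rw [← klPsi_filter_low P L A d, ← klPsi_filter_low P L A' d', h]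
  simp [hA, hd]

lemma klPsi_surj (P L : ℕ) (S : Finset ℕ+)
    (h1 : (S.filter (fun s : ℕ+ => P + 1 < (s : ℕ))).card = L)
    (h2 : (S.filter (fun s : ℕ+ => P < (s : ℕ))).card = L + 1) :
    ∃ A d, klPsi P L A d = S := by
  classical
  -- first: P.succPNat ∈ S
  have hsplit : S.filter (fun s : ℕ+ => P < (s : ℕ)) =
      (S.filter (fun s : ℕ+ => P + 1 < (s : ℕ))) ∪
        (S.filter (fun s : ℕ+ => (s : ℕ) = P + 1)) := by
    rw [← Finset.filter_or]
    apply Finset.filter_congr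
    intro s _
    constructor
    · intro h; by_cases hc : P + 1 < (s : ℕ); exact Or.inl hc; exact Or.inr (by omega)
    · intro h; rcases h with h | h <;> omega
  have hdisj2 : Disjoint (S.filter (fun s : ℕ+ => P + 1 < (s : ℕ)))
      (S.filter (fun s : ℕ+ => (s : ℕ) = P + 1)) := by
    rw [Finset.disjoint_left]
    intro s hs hs'
    rw [mem_filter] at hs hs'
    omega
  have hcard1 : (S.filter (fun s : ℕ+ => (s : ℕ) = P + 1)).card = 1 := by
    have := Finset.card_union_of_disjoint hdisj2
    rw [← hsplit] at this
    omega
  have hPmem : P.succPNat ∈ S := by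
    obtain ⟨s, hs⟩ := Finset.card_eq_one.mp hcard1
    have hsmem : s ∈ S.filter (fun s : ℕ+ => (s : ℕ) = P + 1) := by
      rw [hs]; exact mem_singleton_self s
    rw [mem_filter] at hsmem
    have : s = P.succPNat := by
      apply PNat.coe_injective
      rw [Nat.succPNat_coe, hsmem.2]
    rw [← this]; exact hsmem.1
  obtain ⟨d, hd⟩ := klBset_surj L (S.filter (fun s : ℕ+ => P + 1 < (s : ℕ))) (P+1) h1
    (fun b hb => (mem_filter.mp hb).2)
  set A : Finset (Fin P) := univ.filter (fun a : Fin P => (a : ℕ).succPNat ∈ S) with hA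
  refine ⟨A, d, ?_⟩
  ext s
  rw [klPsi, mem_union, mem_insert, ← hd, mem_filter, klLow_mem_iff]
  constructor
  · rintro (⟨a, ha, hval⟩ | rfl | ⟨hmem, _⟩)
    · rw [hA, mem_filter] at ha
      have : s = (a : ℕ).succPNat := PNat.coe_injective (by rw [Nat.succPNat_coe, hval])
      rw [this]; exact ha.2
    · exact hPmem
    · exact hmem
  · intro hs
    by_cases hc1 : P + 1 < (s : ℕ)
    · exact Or.inr (Or.inr ⟨hs, hc1⟩)
    by_cases hc2 : (s : ℕ) = P + 1
    · refine Or.inr (Or.inl ?_)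
      apply PNat.coe_injective
      rw [Nat.succPNat_coe, hc2]
    · -- (s : ℕ) ≤ P
      have hle : (s : ℕ) ≤ P := by omega
      have hpos : 1 ≤ (s : ℕ) := s.pos
      refine Or.inl ⟨⟨(s : ℕ) - 1, by omega⟩, ?_, by simp; omega⟩
      rw [hA, mem_filter]
      refine ⟨mem_univ _, ?_⟩
      have : ((⟨(s : ℕ) - 1, by omega⟩ : Fin P) : ℕ).succPNat = s := by
        apply PNat.coe_injective
        rw [Nat.succPNat_coe]
        simp
        omega
      rw [this]; exact hs

lemma klMain (P L N : ℕ) (hN : N = P + 1) (q z : ℂ) (hq : ‖q‖ < 1) :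
    (∑' S : {S : Finset ℕ+ //
        (S.filter (fun s : ℕ+ => N < (s : ℕ))).card = L ∧
        (S.filter (fun s : ℕ+ => P < (s : ℕ))).card = L + 1},
      z ^ (S : Finset ℕ+).card * q ^ (∑ s ∈ (S : Finset ℕ+), (s : ℕ))) =
    (∏ a ∈ range P, (1 + z * q ^ (a + 1))) * (∏ a ∈ range L, (1 - q ^ (a + 1))⁻¹) *
      (z ^ (L + 1) * q ^ ((P + 1) + ∑ i ∈ range L, (P + 1 + 1 + i))) := by
  classical
  subst hN
  set Cond := fun S : Finset ℕ+ =>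
    (S.filter (fun s : ℕ+ => P + 1 < (s : ℕ))).card = L ∧
    (S.filter (fun s : ℕ+ => P < (s : ℕ))).card = L + 1 with hCond
  have hcond : ∀ (A : Finset (Fin P)) (d : Fin L → ℕ), Cond (klPsi P L A d) := by
    intro A d
    constructor
    · rw [klPsi_filter_high, klBset_card]
    · rw [klPsi_filter_mid, card_insert_of_notMem (klPr_not_mem_bset P L d), klBset_card]
  set Φ : Finset (Fin P) × (Fin L → ℕ) → {S : Finset ℕ+ // Cond S} :=
    fun ω => ⟨klPsi P L ω.1 ω.2, hcond ω.1 ω.2⟩ with hΦ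
  have hbij : Function.Bijective Φ := by
    constructor
    · intro ω ω' h
      apply klPsi_inj P L
      simpa [hΦ, Subtype.ext_iff] using h
    · rintro ⟨S, hS1, hS2⟩
      obtain ⟨A, d, hAd⟩ := klPsi_surj P L S hS1 hS2
      exact ⟨⟨A, d⟩, Subtype.ext hAd⟩
  set e := Equiv.ofBijective Φ hbij with he
  rw [← Equiv.tsum_eq e (fun S : {S : Finset ℕ+ // Cond S} =>
    z ^ (S : Finset ℕ+).card * q ^ (∑ s ∈ (S : Finset ℕ+), (s : ℕ)))]
  have hterm : ∀ ω : Finset (Fin P) × (Fin L → ℕ),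
      z ^ ((e ω : Finset ℕ+)).card * q ^ (∑ s ∈ (e ω : Finset ℕ+), (s : ℕ)) =
      (z ^ (L + 1) * q ^ ((P + 1) + ∑ i ∈ range L, (P + 1 + 1 + i))) *
        ((z ^ ω.1.card * q ^ (∑ a ∈ ω.1, ((a : ℕ) + 1))) *
          ∏ i : Fin L, q ^ ((L - (i : ℕ)) * ω.2 i)) := by
    intro ω
    have hco : (e ω : Finset ℕ+) = klPsi P L ω.1 ω.2 := rfl
    rw [hco, klPsi_card, klPsi_sum, Finset.prod_pow_eq_pow_sum]
    rw [pow_add z, pow_add q, pow_add q, pow_add q]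
    ring
  rw [tsum_congr hterm]
  rw [tsum_mul_left]
  have hGsum : Summable (fun A : Finset (Fin P) =>
      ‖z ^ A.card * q ^ (∑ a ∈ A, ((a : ℕ) + 1))‖) := Summable.of_finite
  have hHsum := (klH q hq L).1
  have hprod : (∑' ω : Finset (Fin P) × (Fin L → ℕ),
      (z ^ ω.1.card * q ^ (∑ a ∈ ω.1, ((a : ℕ) + 1))) *
        ∏ i : Fin L, q ^ ((L - (i : ℕ)) * ω.2 i)) =
      (∑' A : Finset (Fin P), z ^ A.card * q ^ (∑ a ∈ A, ((a : ℕ) + 1))) *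
        (∑' d : Fin L → ℕ, ∏ i : Fin L, q ^ ((L - (i : ℕ)) * d i)) := by
    symm
    apply tsum_mul_tsum_of_summable_norm hGsum hHsum
  rw [hprod, tsum_fintype, klLow, (klH q hq L).2]
  ring

/-- Generating function for `(k,ℓ)`-rank-`m` tilings with `b(km-j) = ℓm - ℓ`
and `b(km-j-1) = ℓm - ℓ + 1` (`0 ≤ j ≤ k-1`): the sum of `z^|S| q^(Σ_{s∈S} s)`
over such finite subsets `S` of `ℤ_{>0}` is
`((-zq;q)_{km-j-1}/(q;q)_{ℓm-ℓ}) z^{ℓm-ℓ+1} q^{(ℓm-ℓ+1)((2k+ℓ)m-2j-ℓ)/2}`. -/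
theorem kl_rank_case_two_generating_function (k l m j : ℕ)
    (hk : 0 < k) (hl : 0 < l) (hm : 0 < m) (hj : j < k)
    (q z : ℂ) (hq : ‖q‖ < 1) :
    (∑' S : {S : Finset ℕ+ //
        (S.filter (fun s : ℕ+ => k * m - j < (s : ℕ))).card = l * m - l ∧
        (S.filter (fun s : ℕ+ => k * m - j - 1 < (s : ℕ))).card = l * m - l + 1},
      z ^ (S : Finset ℕ+).card * q ^ (∑ s ∈ (S : Finset ℕ+), (s : ℕ))) =
    ((∏ a ∈ Finset.range (k * m - j - 1), (1 + z * q ^ (a + 1))) /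
        (∏ a ∈ Finset.range (l * m - l), (1 - q ^ (a + 1)))) *
      z ^ (l * m - l + 1) * q ^ ((l * m - l + 1) * ((2 * k + l) * m - 2 * j - l) / 2) := by
  have hq' : ‖q‖ < 1 := by exact hq
  have hkm : k ≤ k * m := Nat.le_mul_of_pos_right k hm
  have hlm : l ≤ l * m := Nat.le_mul_of_pos_right l hm
  have hN : k * m - j = (k * m - j - 1) + 1 := by omega
  set P := k * m - j - 1 with hP
  set L := l * m - l with hL
  rw [klMain P L (k * m - j) hN q z hq']
  -- exponent arithmetic
  have hT := Finset.sum_range_id_mul_two L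
  have hsplit : ∑ i ∈ range L, (P + 1 + 1 + i) = L * (P + 2) + ∑ i ∈ range L, i := by
    rw [Finset.sum_add_distrib, Finset.sum_const, card_range, smul_eq_mul]
  have hX : (2 * k + l) * m - 2 * j - l = 2 * (P + 1) + L := by
    have h3 : (2 * k + l) * m = 2 * (k * m) + l * m := by ring
    omega
  have hkey : (L + 1) * (2 * (P + 1) + L) =
      2 * ((P + 1) + (L * (P + 2) + ∑ i ∈ range L, i)) := by
    cases L with
    | zero => simp
    | succ L' =>
      have h2T : (∑ i ∈ range (L' + 1), i) * 2 = (L' + 1) * L' := by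
        rw [Finset.sum_range_id_mul_two]; rfl
      zify at h2T ⊢
      linear_combination (-1 : ℤ) * h2T
  have hE : (L + 1) * ((2 * k + l) * m - 2 * j - l) / 2 =
      (P + 1) + ∑ i ∈ range L, (P + 1 + 1 + i) := by
    rw [hX, hkey, hsplit]
    omega
  rw [hE]
  rw [div_eq_mul_inv, ← Finset.prod_inv_distrib]
  ring
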